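/- Let d, m, n be positive natural numbers with m ≤ n. Identify (ℂ^d)^{⊗n} with (ℂ^d)^{⊗m} ⊗ (ℂ^d)^{⊗(n−m)} by indexing with ((Fin m → Fin d) × (Fin (n−m) → Fin d)); let Π_sym^{n,d} be the symmetrizer over Equiv.Perm (Fin m ⊕ Fin (n−m)) and Π_sym^{m,d} the symmetrizer over Equiv.Perm (Fin m). Then the Werner cloning map is trace-preserving on the symmetric subspace: for every A : Matrix ((Fin m → Fin d)) ((Fin m → Fin d)) ℂ with Π_sym^{m,d} · A · Π_sym^{m,d} = A, one has (d[m] / d[n]) · trace(Π_sym^{n,d} · (A ⊗ₖ 1) · Π_sym^{n,d}) = trace A, where A ⊗ₖ 1 is the Kronecker product of A with the identity matrix on (Fin (n−m) → Fin d) and d[k] = (k + d − 1).choose k. -/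

import Mathlib

open Matrix Kronecker Finset

section CountPerm

variable {ι κ : Type*} [DecidableEq κ]

/-- permutations aligning `f` with `g` correspond to families of fiber bijections. -/
def permFiberEquiv (f g : ι → κ) :
    {σ : Equiv.Perm ι // f ∘ σ = g} ≃ ∀ j : κ, ({x // g x = j} ≃ {x // f x = j}) where
  toFun := fun σ j =>
    { toFun := fun x => ⟨σ.1 x.1, by
        have h1 : f (σ.1 x.1) = g x.1 := congrFun σ.2 x.1
        rw [h1, x.2]⟩
      invFun := fun y => ⟨σ.1.symm y.1, by
        have h1 : f (σ.1 (σ.1.symm y.1)) = g (σ.1.symm y.1) := congrFun σ.2 _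
        rw [Equiv.apply_symm_apply] at h1
        rw [← h1, y.2]⟩
      left_inv := fun x => Subtype.ext (Equiv.symm_apply_apply _ _)
      right_inv := fun y => Subtype.ext (Equiv.apply_symm_apply _ _) }
  invFun := fun F =>
    ⟨(Equiv.sigmaFiberEquiv g).symm.trans ((Equiv.sigmaCongrRight F).trans
        (Equiv.sigmaFiberEquiv f)),
      funext fun x => (F (g x) ⟨x, rfl⟩).2⟩
  left_inv := fun σ => Subtype.ext (Equiv.ext fun x => rfl)
  right_inv := fun F => funext fun j => Equiv.ext fun x => by
    obtain ⟨x, hx⟩ := x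
    subst hx
    rfl

variable [Fintype ι] [DecidableEq ι] [Fintype κ]

lemma card_perm_comp (f g : ι → κ) :
    Fintype.card {σ : Equiv.Perm ι // f ∘ σ = g} =
      if ∀ j, Fintype.card {x // f x = j} = Fintype.card {x // g x = j}
      then ∏ j, (Fintype.card {x // f x = j}).factorial else 0 := by
  rw [Fintype.card_congr (permFiberEquiv f g), Fintype.card_pi]
  by_cases h : ∀ j, Fintype.card {x // f x = j} = Fintype.card {x // g x = j}
  · rw [if_pos h]
    refine Finset.prod_congr rfl fun j _ => ?_
    rw [Fintype.card_equiv (Fintype.equivOfCardEq (h j).symm), h j]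
  · rw [if_neg h]
    obtain ⟨j, hj⟩ := not_forall.mp h
    refine Finset.prod_eq_zero (Finset.mem_univ j) ?_
    rw [Fintype.card_eq_zero_iff]
    exact ⟨fun e => hj (Fintype.card_congr e).symm⟩

end CountPerm

section Combinatorics

lemma card_fiber_eq_sum {ι κ : Type*} [Fintype ι] [DecidableEq κ] (f : ι → κ) (j : κ) :
    Fintype.card {x // f x = j} = ∑ x, if f x = j then 1 else 0 := by
  rw [Fintype.card_subtype, Finset.card_filter]

lemma card_fiber_cons {d k : ℕ} (j : Fin d) (c : Fin k → Fin d) (i : Fin d) :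
    Fintype.card {x // Fin.cons (α := fun _ => Fin d) j c x = i} =
      (if j = i then 1 else 0) + Fintype.card {x // c x = i} := by
  rw [card_fiber_eq_sum, card_fiber_eq_sum, Fin.sum_univ_succ]
  simp [Fin.cons_zero, Fin.cons_succ]

lemma card_fiber_elim {α β κ : Type*} [Fintype α] [Fintype β] [DecidableEq κ]
    (a : α → κ) (c : β → κ) (j : κ) :
    Fintype.card {x : α ⊕ β // Sum.elim a c x = j}
      = Fintype.card {x // a x = j} + Fintype.card {x // c x = j} := by
  rw [card_fiber_eq_sum, card_fiber_eq_sum, card_fiber_eq_sum, Fintype.sum_sum_type]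
  simp only [Sum.elim_inl, Sum.elim_inr]
  congr

lemma sum_card_fiber {ι κ : Type*} [Fintype ι] [Fintype κ] [DecidableEq κ] (f : ι → κ) :
    ∑ j, Fintype.card {x // f x = j} = Fintype.card ι := by
  simp only [card_fiber_eq_sum]
  rw [Finset.sum_comm]
  have h1 : ∀ x : ι, (∑ j, if f x = j then 1 else 0) = 1 := by
    intro x
    rw [Finset.sum_ite_eq]
    simp
  rw [Finset.sum_congr rfl fun x _ => h1 x, Finset.sum_const, Finset.card_univ, smul_eq_mul,
    mul_one]

/-- closed form for the weighted sum over functions. -/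
lemma B_closed (e : ℕ) :
    ∀ (k : ℕ) (μ : Fin (e + 1) → ℕ),
      ∑ c : Fin k → Fin (e + 1), ∏ i, (μ i + Fintype.card {x // c x = i}).factorial
        = k.factorial * (∏ i, (μ i).factorial) * ((∑ i, μ i) + k + e).choose k := by
  intro k
  induction k with
  | zero =>
    intro μ
    simp
  | succ k ih =>
    intro μ
    rw [← Equiv.sum_comp (Fin.consEquiv fun _ => Fin (e+1))
      (fun c => ∏ i, (μ i + Fintype.card {x // c x = i}).factorial)]
    rw [Fintype.sum_prod_type]
    have step : ∀ (j : Fin (e+1)),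
        (∑ c : Fin k → Fin (e+1), ∏ i,
          (μ i + Fintype.card {x // (Fin.consEquiv fun _ => Fin (e+1)) (j, c) x = i}).factorial)
        = k.factorial * ((∏ i, (μ i).factorial) * (μ j + 1)) * ((∑ i, μ i) + 1 + k + e).choose k := by
      intro j
      have key : ∀ (c : Fin k → Fin (e+1)) (i : Fin (e+1)),
          μ i + Fintype.card {x // (Fin.consEquiv fun _ => Fin (e+1)) (j, c) x = i}
          = (fun i => μ i + if j = i then 1 else 0) i + Fintype.card {x // c x = i} := by
        intro c i
        show μ i + Fintype.card {x // Fin.cons (α := fun _ => Fin (e+1)) j c x = i} = _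
        rw [card_fiber_cons]
        ring
      calc (∑ c : Fin k → Fin (e+1), ∏ i,
            (μ i + Fintype.card {x // (Fin.consEquiv fun _ => Fin (e+1)) (j, c) x = i}).factorial)
          = ∑ c : Fin k → Fin (e+1), ∏ i,
            ((fun i => μ i + if j = i then 1 else 0) i + Fintype.card {x // c x = i}).factorial := by
            refine Finset.sum_congr rfl fun c _ => Finset.prod_congr rfl fun i _ => ?_
            rw [key c i]
        _ = k.factorial * (∏ i, (μ i + if j = i then 1 else 0).factorial) *
              ((∑ i, (μ i + if j = i then 1 else 0)) + k + e).choose k := ih _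
        _ = k.factorial * ((∏ i, (μ i).factorial) * (μ j + 1)) * ((∑ i, μ i) + 1 + k + e).choose k := by
            have h1 : (∏ i, (μ i + if j = i then 1 else 0).factorial)
                = (∏ i, (μ i).factorial) * (μ j + 1) := by
              have h0 : ∀ i : Fin (e+1), (μ i + if j = i then 1 else 0).factorial
                  = (μ i).factorial * (if j = i then μ i + 1 else 1) := by
                intro i
                by_cases h : j = i <;> simp [h, Nat.factorial_succ, Nat.mul_comm]
              rw [Finset.prod_congr rfl fun i _ => h0 i, Finset.prod_mul_distrib,
                Finset.prod_ite_eq]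
              simp
            have h2 : (∑ i, (μ i + if j = i then 1 else 0)) = (∑ i, μ i) + 1 := by
              rw [Finset.sum_add_distrib, Finset.sum_ite_eq]
              simp
            rw [h1, h2]
    rw [Finset.sum_congr rfl fun j _ => step j]
    have hsum : (∑ j : Fin (e+1), k.factorial * ((∏ i, (μ i).factorial) * (μ j + 1)) *
          ((∑ i, μ i) + 1 + k + e).choose k)
        = k.factorial * ((∏ i, (μ i).factorial) * ((∑ i, μ i) + (e + 1))) *
          ((∑ i, μ i) + 1 + k + e).choose k := by
      rw [← Finset.sum_mul, ← Finset.mul_sum, ← Finset.mul_sum, Finset.sum_add_distrib]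
      simp [Finset.card_univ]
    rw [hsum]
    have hM : (∑ i, μ i) + 1 + k + e = (∑ i, μ i) + (k + 1) + e := by ring
    rw [hM]
    set S := ∑ i, μ i
    set P := ∏ i, (μ i).factorial
    have key : (S + (e + 1)) * ((S + (k+1) + e).choose k)
        = (k + 1) * ((S + (k+1) + e).choose (k+1)) := by
      have h := Nat.choose_succ_right_eq (S + (k+1) + e) k
      have hsub : S + (k+1) + e - k = S + (e + 1) := by omega
      rw [hsub] at h
      rw [mul_comm (S + (e+1)), ← h, mul_comm]
    rw [Nat.factorial_succ]
    calc k.factorial * (P * (S + (e+1))) * (S + (k+1) + e).choose k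
        = (k.factorial * P) * ((S + (e+1)) * (S + (k+1) + e).choose k) := by ring
      _ = (k.factorial * P) * ((k+1) * (S + (k+1) + e).choose (k+1)) := by rw [key]
      _ = (k + 1) * k.factorial * P * (S + (k+1) + e).choose (k+1) := by ring

lemma nat_arith (e m k P : ℕ) :
    m.factorial * ((m+e).choose m) * (k.factorial * P * ((m+k+e).choose k))
      = (m+k).factorial * ((m+k+e).choose (m+k)) * P := by
  apply Nat.eq_of_mul_eq_mul_right (Nat.factorial_pos e)
  have h1 : (m+e).choose m * m.factorial * e.factorial = (m+e).factorial := by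
    have h := Nat.choose_mul_factorial_mul_factorial (Nat.le_add_right m e)
    rwa [show m + e - m = e by omega] at h
  have h2 : (m+k+e).choose k * k.factorial * (m+e).factorial = (m+k+e).factorial := by
    have h := Nat.choose_mul_factorial_mul_factorial (show k ≤ m+k+e by omega)
    rwa [show m+k+e-k = m+e by omega] at h
  have h3 : (m+k+e).choose (m+k) * (m+k).factorial * e.factorial = (m+k+e).factorial := by
    have h := Nat.choose_mul_factorial_mul_factorial (show m+k ≤ m+k+e by omega)
    rwa [show m+k+e-(m+k) = e by omega] at h
  calc m.factorial * ((m+e).choose m) * (k.factorial * P * ((m+k+e).choose k)) * e.factorial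
      = ((m+e).choose m * m.factorial * e.factorial) * (k.factorial * P * ((m+k+e).choose k)) := by
        ring
    _ = (m+e).factorial * (k.factorial * P * ((m+k+e).choose k)) := by rw [h1]
    _ = ((m+k+e).choose k * k.factorial * (m+e).factorial) * P := by ring
    _ = (m+k+e).factorial * P := by rw [h2]
    _ = ((m+k+e).choose (m+k) * (m+k).factorial * e.factorial) * P := by rw [h3]
    _ = (m+k).factorial * ((m+k+e).choose (m+k)) * P * e.factorial := by ring

lemma entry_identity (e m k : ℕ) (a b : Fin m → Fin (e+1)) :
    m.factorial * ((m+e).choose m) * (∑ c : Fin k → Fin (e+1),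
      Fintype.card {σ : Equiv.Perm (Fin m ⊕ Fin k) // Sum.elim a c ∘ σ = Sum.elim b c})
    = (m+k).factorial * ((m+k+e).choose (m+k)) *
      Fintype.card {τ : Equiv.Perm (Fin m) // a ∘ τ = b} := by
  classical
  rw [card_perm_comp a b]
  by_cases hcond : ∀ j, Fintype.card {x // a x = j} = Fintype.card {x // b x = j}
  · rw [if_pos hcond]
    have hS : (∑ c : Fin k → Fin (e+1),
        Fintype.card {σ : Equiv.Perm (Fin m ⊕ Fin k) // Sum.elim a c ∘ σ = Sum.elim b c})
        = ∑ c : Fin k → Fin (e+1), ∏ j,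
            (Fintype.card {x // a x = j} + Fintype.card {x // c x = j}).factorial := by
      refine Finset.sum_congr rfl fun c _ => ?_
      rw [card_perm_comp, if_pos]
      · exact Finset.prod_congr rfl fun j _ => by rw [card_fiber_elim]
      · intro j
        rw [card_fiber_elim, card_fiber_elim, hcond j]
    rw [hS, B_closed e k (fun j => Fintype.card {x // a x = j})]
    have hsum : (∑ j, Fintype.card {x // a x = j}) = m := by
      rw [sum_card_fiber, Fintype.card_fin]
    rw [hsum]
    exact nat_arith e m k _
  · rw [if_neg hcond]
    have hS0 : ∀ c : Fin k → Fin (e+1),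
        Fintype.card {σ : Equiv.Perm (Fin m ⊕ Fin k) // Sum.elim a c ∘ σ = Sum.elim b c} = 0 := by
      intro c
      rw [card_perm_comp, if_neg]
      intro hall
      refine hcond fun j => ?_
      have h := hall j
      rw [card_fiber_elim, card_fiber_elim] at h
      omega
    rw [Finset.sum_congr rfl fun c _ => hS0 c]
    simp

end Combinatorics

noncomputable section MatrixLayer

variable (d : ℕ) {ι : Type*} [Fintype ι] [DecidableEq ι]

def permMat (σ : Equiv.Perm ι) : Matrix (ι → Fin d) (ι → Fin d) ℂ :=
  Matrix.of fun a b => if a ∘ σ = b then 1 else 0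

lemma permMat_mul (σ τ : Equiv.Perm ι) :
    permMat d σ * permMat d τ = permMat d (σ * τ) := by
  ext a b
  simp only [permMat, Matrix.mul_apply, Matrix.of_apply]
  have h1 : ∀ g : ι → Fin d, (if a ∘ σ = g then (1:ℂ) else 0) * (if g ∘ τ = b then 1 else 0)
      = if a ∘ σ = g then (if g ∘ τ = b then (1:ℂ) else 0) else 0 := by
    intro g; split <;> simp
  rw [Finset.sum_congr rfl fun g _ => h1 g, Finset.sum_ite_eq]
  have hc : (a ∘ ⇑σ) ∘ ⇑τ = a ∘ ⇑(σ * τ) := by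
    funext x; simp [Function.comp, Equiv.Perm.mul_apply]
  rw [if_pos (Finset.mem_univ _)]
  exact if_congr (by rw [hc]) rfl rfl

def symPr : Matrix (ι → Fin d) (ι → Fin d) ℂ :=
  (((Fintype.card ι).factorial : ℂ)⁻¹) • ∑ σ : Equiv.Perm ι, permMat d σ

lemma symPr_mul_self : symPr d (ι := ι) * symPr d = symPr d := by
  unfold symPr
  rw [Matrix.smul_mul, Matrix.mul_smul, smul_smul, Finset.sum_mul_sum]
  have h1 : ∀ σ : Equiv.Perm ι, (∑ τ : Equiv.Perm ι, permMat d σ * permMat d τ)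
      = ∑ ρ : Equiv.Perm ι, permMat d ρ := by
    intro σ
    rw [Finset.sum_congr rfl fun τ _ => permMat_mul d σ τ]
    exact Equiv.sum_comp (Equiv.mulLeft σ) (permMat d)
  rw [Finset.sum_congr rfl fun σ _ => h1 σ, Finset.sum_const, Finset.card_univ,
    Fintype.card_perm, ← Nat.cast_smul_eq_nsmul ℂ, smul_smul]
  congr 1
  have hN : (((Fintype.card ι).factorial : ℂ)) ≠ 0 :=
    Nat.cast_ne_zero.mpr (Nat.factorial_ne_zero _)
  field_simp

lemma trace_permMat_mul (σ : Equiv.Perm ι) (N : Matrix (ι → Fin d) (ι → Fin d) ℂ) :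
    Matrix.trace (permMat d σ * N) = ∑ f : ι → Fin d, N (f ∘ σ) f := by
  unfold Matrix.trace Matrix.diag permMat
  refine Finset.sum_congr rfl fun f _ => ?_
  rw [Matrix.mul_apply]
  have h1 : ∀ g, (Matrix.of fun a b => if a ∘ ⇑σ = b then (1:ℂ) else 0) f g * N g f
      = if f ∘ ⇑σ = g then N g f else 0 := by
    intro g; simp only [Matrix.of_apply]; split <;> simp
  rw [Finset.sum_congr rfl fun g _ => h1 g, Finset.sum_ite_eq]
  simp

end MatrixLayer

/-- The symmetrizer on `(ℂ^d)^{⊗m}`. -/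
noncomputable def symmetrizer (d m : ℕ) :
    Matrix (Fin m → Fin d) (Fin m → Fin d) ℂ :=
  ((m.factorial : ℂ)⁻¹) • ∑ σ : Equiv.Perm (Fin m),
    Matrix.of fun a b => if a ∘ σ = b then (1 : ℂ) else 0

/-- The symmetrizer on `(ℂ^d)^{⊗m} ⊗ (ℂ^d)^{⊗k}`, with permutations of `Fin m ⊕ Fin k`
acting on the product index `(Fin m → Fin d) × (Fin k → Fin d)`. -/
noncomputable def symmetrizerSplit (d m k : ℕ) :
    Matrix ((Fin m → Fin d) × (Fin k → Fin d)) ((Fin m → Fin d) × (Fin k → Fin d)) ℂ :=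
  (((m + k).factorial : ℂ)⁻¹) • ∑ σ : Equiv.Perm (Fin m ⊕ Fin k),
    Matrix.of fun p q =>
      if Sum.elim p.1 p.2 ∘ σ = Sum.elim q.1 q.2 then (1 : ℂ) else 0

lemma symmetrizer_eq_symPr (d m : ℕ) : symmetrizer d m = symPr d (ι := Fin m) := by
  unfold symmetrizer symPr permMat
  rw [Fintype.card_fin]

/-- the index equivalence. -/
abbrev splitEquiv (d m k : ℕ) :
    ((Fin m → Fin d) × (Fin k → Fin d)) ≃ (Fin m ⊕ Fin k → Fin d) :=
  (Equiv.sumArrowEquivProdArrow (Fin m) (Fin k) (Fin d)).symm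

lemma splitEquiv_apply (d m k : ℕ) (p : (Fin m → Fin d) × (Fin k → Fin d)) :
    splitEquiv d m k p = Sum.elim p.1 p.2 := rfl

lemma symmetrizerSplit_eq_symPr (d m k : ℕ) :
    symmetrizerSplit d m k =
      (symPr d (ι := Fin m ⊕ Fin k)).submatrix (splitEquiv d m k) (splitEquiv d m k) := by
  unfold symmetrizerSplit symPr permMat
  ext p q
  simp [Matrix.submatrix_apply, Matrix.sum_apply, Fintype.card_sum, Fintype.card_fin,
    splitEquiv_apply]

lemma trace_submatrix_equiv' {R α β : Type*} [AddCommMonoid R] [Fintype α] [Fintype β]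
    (e : α ≃ β) (M : Matrix β β R) : Matrix.trace (M.submatrix e e) = Matrix.trace M := by
  unfold Matrix.trace Matrix.diag
  exact Equiv.sum_comp e fun x => M x x

lemma fun_eq_elim_iff {α β γ : Type*} (X : α ⊕ β → γ) (b : α → γ) (c : β → γ) :
    X = Sum.elim b c ↔ X ∘ Sum.inl = b ∧ X ∘ Sum.inr = c := by
  constructor
  · rintro rfl; exact ⟨rfl, rfl⟩
  · rintro ⟨h1, h2⟩
    funext x
    cases x with
    | inl v => exact congrFun h1 v
    | inr v => exact congrFun h2 v

lemma indicator_expand {d m k : ℕ} (B : Matrix (Fin m → Fin d) (Fin m → Fin d) ℂ)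
    (X : Fin m ⊕ Fin k → Fin d) (a : Fin m → Fin d) (c : Fin k → Fin d) :
    B (X ∘ Sum.inl) a * (if X ∘ Sum.inr = c then (1:ℂ) else 0)
      = ∑ b : Fin m → Fin d, (if X = Sum.elim b c then (1:ℂ) else 0) * B b a := by
  by_cases h : X ∘ Sum.inr = c
  · rw [if_pos h, mul_one]
    have h2 : ∀ b, (if X = Sum.elim b c then (1:ℂ) else 0)
        = if X ∘ Sum.inl = b then 1 else 0 := by
      intro b
      refine if_congr ?_ rfl rfl
      rw [fun_eq_elim_iff]
      simp [h]
    rw [Finset.sum_congr rfl fun b _ => by rw [h2 b]]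
    have h3 : ∀ b, (if X ∘ Sum.inl = b then (1:ℂ) else 0) * B b a
        = if X ∘ Sum.inl = b then B b a else 0 := by intro b; split <;> simp
    rw [Finset.sum_congr rfl fun b _ => h3 b, Finset.sum_ite_eq]
    simp
  · rw [if_neg h, mul_zero]
    refine (Finset.sum_eq_zero fun b _ => ?_).symm
    rw [if_neg, zero_mul]
    intro hX
    exact h ((fun_eq_elim_iff X b c).mp hX).2

lemma trace_big (d m k : ℕ) (B : Matrix (Fin m → Fin d) (Fin m → Fin d) ℂ) :
    Matrix.trace (symmetrizerSplit d m k *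
        (B ⊗ₖ (1 : Matrix (Fin k → Fin d) (Fin k → Fin d) ℂ)) * symmetrizerSplit d m k)
    = (((m+k).factorial : ℂ))⁻¹ * ∑ a : Fin m → Fin d, ∑ b : Fin m → Fin d,
        (∑ c : Fin k → Fin d, (Fintype.card
          {σ : Equiv.Perm (Fin m ⊕ Fin k) // Sum.elim a c ∘ σ = Sum.elim b c} : ℂ)) * B b a := by
  classical
  set E := splitEquiv d m k with hE
  set M := B ⊗ₖ (1 : Matrix (Fin k → Fin d) (Fin k → Fin d) ℂ) with hM
  set M' := M.submatrix E.symm E.symm with hM'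
  have hMs : M = M'.submatrix E E := by
    rw [hM', Matrix.submatrix_submatrix]
    simp [Equiv.symm_comp_self]
  rw [symmetrizerSplit_eq_symPr, hMs]
  rw [Matrix.submatrix_mul_equiv, Matrix.submatrix_mul_equiv, trace_submatrix_equiv']
  rw [Matrix.trace_mul_cycle, symPr_mul_self d]
  unfold symPr
  rw [Matrix.smul_mul, Matrix.trace_smul, Finset.sum_mul, Matrix.trace_sum]
  rw [Fintype.card_sum, Fintype.card_fin, Fintype.card_fin]
  congr 1
  rw [Finset.sum_congr rfl fun σ _ => trace_permMat_mul d σ M']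
  have hM'app : ∀ (g f : Fin m ⊕ Fin k → Fin d),
      M' g f = B (g ∘ Sum.inl) (f ∘ Sum.inl) * (if g ∘ Sum.inr = f ∘ Sum.inr then (1:ℂ) else 0) := by
    intro g f
    rw [hM', Matrix.submatrix_apply, hM]
    have h4 : E.symm g = (g ∘ Sum.inl, g ∘ Sum.inr) := rfl
    rw [h4, show E.symm f = (f ∘ Sum.inl, f ∘ Sum.inr) from rfl]
    simp [Matrix.kroneckerMap_apply, Matrix.one_apply]
  rw [Finset.sum_comm]
  rw [← Equiv.sum_comp E (fun f => ∑ σ : Equiv.Perm (Fin m ⊕ Fin k), M' (f ∘ ⇑σ) f)]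
  rw [Fintype.sum_prod_type]
  refine Finset.sum_congr rfl fun a _ => ?_
  have hEapp : ∀ p : (Fin m → Fin d) × (Fin k → Fin d), E p = Sum.elim p.1 p.2 := fun _ => rfl
  simp only [hEapp]
  have step2 : ∀ (c : Fin k → Fin d) (σ : Equiv.Perm (Fin m ⊕ Fin k)),
      M' (Sum.elim a c ∘ ⇑σ) (Sum.elim a c)
      = ∑ b : Fin m → Fin d,
          (if Sum.elim a c ∘ ⇑σ = Sum.elim b c then (1:ℂ) else 0) * B b a := by
    intro c σ
    rw [hM'app]
    exact indicator_expand B (Sum.elim a c ∘ ⇑σ) a c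
  rw [Finset.sum_congr rfl fun c _ => Finset.sum_congr rfl fun σ _ => step2 c σ]
  rw [Finset.sum_congr rfl fun c (_ : c ∈ Finset.univ) => Finset.sum_comm, Finset.sum_comm]
  refine Finset.sum_congr rfl fun b _ => ?_
  have step3 : ∀ c : Fin k → Fin d,
      (∑ σ : Equiv.Perm (Fin m ⊕ Fin k),
        (if Sum.elim a c ∘ ⇑σ = Sum.elim b c then (1:ℂ) else 0))
      = (Fintype.card {σ : Equiv.Perm (Fin m ⊕ Fin k) //
            Sum.elim a c ∘ σ = Sum.elim b c} : ℂ) := by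
    intro c
    rw [Finset.sum_boole, Fintype.card_subtype]
  calc (∑ c : Fin k → Fin d, ∑ σ : Equiv.Perm (Fin m ⊕ Fin k),
          (if Sum.elim a c ∘ ⇑σ = Sum.elim b c then (1:ℂ) else 0) * B b a)
      = (∑ c : Fin k → Fin d, ∑ σ : Equiv.Perm (Fin m ⊕ Fin k),
          (if Sum.elim a c ∘ ⇑σ = Sum.elim b c then (1:ℂ) else 0)) * B b a := by
        rw [Finset.sum_mul]
        exact Finset.sum_congr rfl fun c _ => (Finset.sum_mul _ _ _).symm
    _ = (∑ c : Fin k → Fin d, (Fintype.card {σ : Equiv.Perm (Fin m ⊕ Fin k) //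
            Sum.elim a c ∘ σ = Sum.elim b c} : ℂ)) * B b a := by
        rw [Finset.sum_congr rfl fun c _ => step3 c]

lemma trace_symmetrizer_mul (d m : ℕ) (B : Matrix (Fin m → Fin d) (Fin m → Fin d) ℂ) :
    Matrix.trace (symmetrizer d m * B)
    = ((m.factorial : ℂ))⁻¹ * ∑ a : Fin m → Fin d, ∑ b : Fin m → Fin d,
        (Fintype.card {τ : Equiv.Perm (Fin m) // a ∘ τ = b} : ℂ) * B b a := by
  classical
  rw [symmetrizer_eq_symPr]
  unfold symPr
  rw [Matrix.smul_mul, Matrix.trace_smul, Finset.sum_mul, Matrix.trace_sum, Fintype.card_fin]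
  congr 1
  rw [Finset.sum_congr rfl fun σ _ => trace_permMat_mul d σ B, Finset.sum_comm]
  refine Finset.sum_congr rfl fun a _ => ?_
  have h1 : ∀ σ : Equiv.Perm (Fin m),
      B (a ∘ ⇑σ) a = ∑ b, (if a ∘ ⇑σ = b then (1:ℂ) else 0) * B b a := by
    intro σ
    have h2 : ∀ b, (if a ∘ ⇑σ = b then (1:ℂ) else 0) * B b a
        = if a ∘ ⇑σ = b then B b a else 0 := by intro b; split <;> simp
    rw [Finset.sum_congr rfl fun b _ => h2 b, Finset.sum_ite_eq]
    simp
  rw [Finset.sum_congr rfl fun σ _ => h1 σ, Finset.sum_comm]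
  refine Finset.sum_congr rfl fun b _ => ?_
  rw [← Finset.sum_mul, Finset.sum_boole, Fintype.card_subtype]

set_option maxHeartbeats 2000000 in
theorem werner_cloning_trace_preserving_on_symmetric_subspace
    (d m n : ℕ) (hd : 0 < d) (hm : 0 < m) (hn : 0 < n) (hmn : m ≤ n)
    (A : Matrix (Fin m → Fin d) (Fin m → Fin d) ℂ)
    (hA : symmetrizer d m * A * symmetrizer d m = A) :
    (((m + d - 1).choose m : ℂ) / ((n + d - 1).choose n : ℂ)) *
      Matrix.trace (symmetrizerSplit d m (n - m) *
        (A ⊗ₖ (1 : Matrix (Fin (n - m) → Fin d) (Fin (n - m) → Fin d) ℂ)) *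
        symmetrizerSplit d m (n - m))
      = Matrix.trace A := by
  obtain ⟨e, rfl⟩ : ∃ e, d = e + 1 := ⟨d - 1, by omega⟩
  have hP : symmetrizer (e+1) m * symmetrizer (e+1) m = symmetrizer (e+1) m := by
    rw [symmetrizer_eq_symPr]
    exact symPr_mul_self (e+1)
  have hPA : symmetrizer (e+1) m * A = A := by
    conv_lhs => rw [← hA]
    rw [← Matrix.mul_assoc, ← Matrix.mul_assoc, hP, hA]
  set k := n - m with hk
  have hch1 : m + (e+1) - 1 = m + e := by omega
  have hch2 : n + (e+1) - 1 = m + k + e := by omega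
  have hch3 : n = m + k := by omega
  rw [hch1, hch2, hch3]
  rw [trace_big (e+1) m k A]
  have hTA : Matrix.trace A
      = ((m.factorial : ℂ))⁻¹ * ∑ a : Fin m → Fin (e+1), ∑ b : Fin m → Fin (e+1),
        (Fintype.card {τ : Equiv.Perm (Fin m) // a ∘ τ = b} : ℂ) * A b a := by
    conv_lhs => rw [← hPA]
    exact trace_symmetrizer_mul (e+1) m A
  rw [hTA, ← mul_assoc]
  rw [Finset.mul_sum, Finset.mul_sum]
  refine Finset.sum_congr rfl fun a _ => ?_
  rw [Finset.mul_sum, Finset.mul_sum]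
  refine Finset.sum_congr rfl fun b _ => ?_
  rw [← mul_assoc, ← mul_assoc]
  congr 1
  have key := entry_identity e m k a b
  have keyC : (m.factorial : ℂ) * ((m+e).choose m : ℂ) *
        (∑ c : Fin k → Fin (e+1), (Fintype.card {σ : Equiv.Perm (Fin m ⊕ Fin k) //
            Sum.elim a c ∘ σ = Sum.elim b c} : ℂ))
      = ((m+k).factorial : ℂ) * ((m+k+e).choose (m+k) : ℂ) *
        (Fintype.card {τ : Equiv.Perm (Fin m) // a ∘ τ = b} : ℂ) := by
    exact_mod_cast key
  have h01 : ((m+e).choose m : ℂ) ≠ 0 :=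
    Nat.cast_ne_zero.mpr (Nat.choose_pos (by omega)).ne'
  have h02 : ((m+k+e).choose (m+k) : ℂ) ≠ 0 :=
    Nat.cast_ne_zero.mpr (Nat.choose_pos (by omega)).ne'
  have h03 : ((m.factorial : ℂ)) ≠ 0 := Nat.cast_ne_zero.mpr (Nat.factorial_ne_zero m)
  have h04 : (((m+k).factorial : ℂ)) ≠ 0 := Nat.cast_ne_zero.mpr (Nat.factorial_ne_zero (m+k))
  field_simp
  linear_combination keyC
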